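/- Applying the Hamiltonian operator B₁ = diag(∂_x - ∂_x³, -σ∂_x) to the vector (λ f ĝ, -2λ²σρ f ĝ)^T and simplifying using the spectral equations f_x = g, g_x = (1/4 - λm + λ²σρ²)f and the adjoint equations f̂_x = -(1/4 - λm + λ²σρ²)ĝ, ĝ_x = -f̂, yields the vector (Ω^m, Ω^ρ) with Ω^m = 4λ²(m - λσρ²)(gĝ - f f̂) - 4λ³σρρ_x f ĝ + 2λ² m_x f ĝ and Ω^ρ = 2λ²ρ(gĝ - f f̂) + 2λ²ρ_x f ĝ. -/

import Mathlib

theorem stmt_5 (f g fh gh m ρ : ℝ → ℝ) (l sg : ℝ) (hsg : sg^2 = 1)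
    (hmdiff : Differentiable ℝ m) (hρdiff : Differentiable ℝ ρ)
    (hf : ∀ x, HasDerivAt f (g x) x)
    (hg : ∀ x, HasDerivAt g ((1/4 - l * m x + l^2 * sg * (ρ x)^2) * f x) x)
    (hfh : ∀ x, HasDerivAt fh (-((1/4 - l * m x + l^2 * sg * (ρ x)^2) * gh x)) x)
    (hgh : ∀ x, HasDerivAt gh (-fh x) x) :
    ∀ x : ℝ,
      (deriv (fun y => l * f y * gh y) x
        - deriv (deriv (deriv (fun y => l * f y * gh y))) x
        = 4*l^2*(m x - l*sg*(ρ x)^2)*(g x * gh x - f x * fh x)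
          - 4*l^3*sg*ρ x*(deriv ρ x)*f x*gh x + 2*l^2*(deriv m x)*f x*gh x)
      ∧ (-sg * deriv (fun y => -2*l^2*sg*ρ y*f y*gh y) x
        = 2*l^2*ρ x*(g x * gh x - f x * fh x) + 2*l^2*(deriv ρ x)*f x*gh x) := by
  set Q : ℝ → ℝ := fun y => 1/4 - l * m y + l^2 * sg * (ρ y)^2 with hQ
  have h1 : ∀ x, HasDerivAt (fun y => l * f y * gh y)
      (l * (g x * gh x - f x * fh x)) x := by
    intro x
    have := (((hf x).const_mul l).mul (hgh x))
    refine this.congr_deriv ?_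
    ring
  have h2 : ∀ x, HasDerivAt (fun y => l * (g y * gh y - f y * fh y))
      (l * (2 * Q x * f x * gh x - 2 * g x * fh x)) x := by
    intro x
    have := (((hg x).mul (hgh x)).sub ((hf x).mul (hfh x))).const_mul l
    refine this.congr_deriv ?_
    simp only [hQ]
    ring
  have h3 : ∀ x, HasDerivAt (fun y => l * (2 * Q y * f y * gh y - 2 * g y * fh y))
      (l * (2 * (-l * deriv m x + 2 * l^2 * sg * ρ x * deriv ρ x) * f x * gh x
        + 2 * Q x * (g x * gh x - f x * fh x)
        - 2 * (Q x * f x * fh x - Q x * g x * gh x))) x := by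
    intro x
    have hQd : HasDerivAt Q (-l * deriv m x + 2 * l^2 * sg * ρ x * deriv ρ x) x := by
      have hm := (hmdiff x).hasDerivAt
      have hr := (hρdiff x).hasDerivAt
      have := (((hm.const_mul l).const_sub (1/4:ℝ)).add
        ((hr.pow 2).const_mul (l^2*sg)))
      refine this.congr_deriv ?_
      ring
    have := ((((hQd.const_mul 2).mul (hf x)).mul (hgh x)).sub
        (((hg x).const_mul 2).mul (hfh x))).const_mul l
    refine this.congr_deriv ?_
    simp only [Pi.mul_apply]
    ring
  have e1 : deriv (fun y => l * f y * gh y) = fun y => l * (g y * gh y - f y * fh y) := by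
    funext y; exact (h1 y).deriv
  have e2 : deriv (fun y => l * (g y * gh y - f y * fh y))
      = fun y => l * (2 * Q y * f y * gh y - 2 * g y * fh y) := by
    funext y; exact (h2 y).deriv
  intro x
  constructor
  · rw [(h1 x).deriv, e1, e2, (h3 x).deriv]
    simp only [hQ]
    ring
  · have h4 : HasDerivAt (fun y => -2*l^2*sg*ρ y*f y*gh y)
        (-2*l^2*sg*(deriv ρ x * f x * gh x + ρ x * (g x * gh x - f x * fh x))) x := by
      have hr := (hρdiff x).hasDerivAt
      have := (((hr.const_mul (-2*l^2*sg)).mul (hf x)).mul (hgh x))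
      refine this.congr_deriv ?_
      simp only [Pi.mul_apply]
      ring
    rw [h4.deriv]
    linear_combination (2*l^2*(deriv ρ x * f x * gh x + ρ x*(g x*gh x - f x*fh x))) * hsg
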